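/- With the diagonal-alphabet setup below and λ > 1: let (i, j) ∈ J₊ × J₋, let k ∈ J₀, and let (x, y)ᵀ ∈ Cell(e_k), where e_k := (a_k, b_k)ᵀ. Then there exist elements (I, v) and (I, w) of the subsemigroup ⟨𝒢'⟩ of Aff(2,ℝ) such that (x, y)ᵀ = r₁·v + r₂·w for some real numbers r₁, r₂ > 0, and moreover (I, v) and (I, w) are each represented by a word over the alphabet 𝒢' in which the letter (A'_k, a'_k) occurs. -/

import Mathlib

open scoped Matrix

/-- Pairs `(M, u)` with multiplication `(M,u)·(N,v) = (MN, Mv + u)`; the affine group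
`Aff(2,ℝ)` consists of such pairs with `M` invertible, and the subsemigroups considered
below only involve invertible linear parts. -/
@[ext]
structure Aff2 : Type where
  lin : Matrix (Fin 2) (Fin 2) ℝ
  trans : Fin 2 → ℝ

namespace Aff2

instance : Mul Aff2 := ⟨fun p q => ⟨p.lin * q.lin, p.lin *ᵥ q.trans + p.trans⟩⟩

instance : One Aff2 := ⟨⟨1, 0⟩⟩

@[simp] lemma mul_lin (p q : Aff2) : (p * q).lin = p.lin * q.lin := rfl
@[simp] lemma mul_trans (p q : Aff2) : (p * q).trans = p.lin *ᵥ q.trans + p.trans := rfl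
@[simp] lemma one_lin : (1 : Aff2).lin = 1 := rfl
@[simp] lemma one_trans : (1 : Aff2).trans = 0 := rfl

instance : Monoid Aff2 where
  mul_assoc a b c := by
    ext i
    · rw [mul_lin, mul_lin, mul_lin, mul_lin, mul_assoc]
    · simp only [mul_trans, mul_lin, Matrix.mulVec_add, Matrix.mulVec_mulVec, add_assoc]
  one_mul a := by
    ext i
    · simp
    · simp
  mul_one a := by
    ext i
    · simp
    · simp [Matrix.mulVec_zero]

end Aff2

/-- The diagonal alphabet `𝒢'`: `(A'_t, a'_t)` with `A'_t = diag(λ^{z_t}, λ^{-z_t})`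
and `a'_t = (a_t, b_t)ᵀ`. -/
noncomputable def diagAlphabet {K : ℕ} (lam : ℝ) (z : Fin K → ℤ) (a b : Fin K → ℝ) :
    Fin K → Aff2 :=
  fun t => ⟨Matrix.diagonal ![lam ^ (z t), lam ^ (-z t)], ![a t, b t]⟩

/-- `Cell(d) = {(r₁ d₁, r₂ d₂)ᵀ : r₁, r₂ > 0}`. -/
def cell (d : Fin 2 → ℝ) : Set (Fin 2 → ℝ) :=
  {v | ∃ r₁ r₂ : ℝ, 0 < r₁ ∧ 0 < r₂ ∧ v = ![r₁ * d 0, r₂ * d 1]}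

/- ### Auxiliary material -/

namespace Stmt15Aux

open Filter

/-- Affine maps of the plane of the form `(diag(p,q), (x,y))`. -/
noncomputable def dAff (p q x y : ℝ) : Aff2 := ⟨Matrix.diagonal ![p, q], ![x, y]⟩

lemma dAff_lin (p q x y : ℝ) : (dAff p q x y).lin = Matrix.diagonal ![p, q] := rfl

lemma dAff_trans (p q x y : ℝ) : (dAff p q x y).trans = ![x, y] := rfl

lemma dAff_congr {p q x y p' q' x' y' : ℝ}
    (h1 : p = p') (h2 : q = q') (h3 : x = x') (h4 : y = y') :
    dAff p q x y = dAff p' q' x' y' := by rw [h1, h2, h3, h4]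

lemma diag_one : Matrix.diagonal ![(1:ℝ), 1] = 1 := by
  have h : (![(1:ℝ), 1] : Fin 2 → ℝ) = fun _ => 1 := by
    funext r; fin_cases r <;> rfl
  rw [h]
  exact Matrix.diagonal_one

lemma dAff_one : (1 : Aff2) = dAff 1 1 0 0 := by
  refine Aff2.ext ?_ ?_
  · rw [Aff2.one_lin, dAff_lin, diag_one]
  · rw [Aff2.one_trans, dAff_trans]
    funext r; fin_cases r <;> rfl

lemma dAff_lin_one (x y : ℝ) : (dAff 1 1 x y).lin = 1 := by
  rw [dAff_lin, diag_one]

lemma dAff_mul (p q x y p' q' x' y' : ℝ) :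
    dAff p q x y * dAff p' q' x' y' = dAff (p * p') (q * q') (p * x' + x) (q * y' + y) := by
  refine Aff2.ext ?_ ?_
  · rw [Aff2.mul_lin, dAff_lin, dAff_lin, dAff_lin, Matrix.diagonal_mul_diagonal]
    have harg : (fun r => ![p, q] r * ![p', q'] r) = ![p * p', q * q'] := by
      funext r; fin_cases r <;> simp
    rw [harg]
  · rw [Aff2.mul_trans, dAff_lin, dAff_trans, dAff_trans, dAff_trans]
    funext r
    fin_cases r <;> simp [Matrix.mulVec_diagonal]

lemma prod_replicate_dAff (n : ℕ) (p q x y : ℝ) :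
    ∃ c d : ℝ, (List.replicate n (dAff p q x y)).prod = dAff (p ^ n) (q ^ n) c d := by
  induction n with
  | zero =>
      refine ⟨0, 0, ?_⟩
      rw [List.replicate_zero, List.prod_nil, pow_zero, pow_zero]
      exact dAff_one
  | succ n ih =>
      obtain ⟨c, d, hcd⟩ := ih
      refine ⟨p * c + x, q * d + y, ?_⟩
      rw [List.replicate_succ, List.prod_cons, hcd, dAff_mul, ← pow_succ', ← pow_succ']

lemma prod_replicate_unit (n : ℕ) (x y : ℝ) :
    (List.replicate n (dAff 1 1 x y)).prod = dAff 1 1 ((n : ℝ) * x) ((n : ℝ) * y) := by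
  induction n with
  | zero =>
      rw [List.replicate_zero, List.prod_nil]
      rw [dAff_one]
      exact dAff_congr rfl rfl (by norm_num) (by norm_num)
  | succ n ih =>
      rw [List.replicate_succ, List.prod_cons, ih, dAff_mul]
      exact dAff_congr (by ring) (by ring) (by push_cast; ring) (by push_cast; ring)

lemma tendsto_aux0 (b : ℝ) :
    Tendsto (fun s : ℕ => b / (s : ℝ)) atTop (nhds 0) :=
  Filter.Tendsto.div_atTop tendsto_const_nhds tendsto_natCast_atTop_atTop

lemma tendsto_aux1 (a b : ℝ) :
    Tendsto (fun s : ℕ => (a * (s : ℝ) + b) / (s : ℝ)) atTop (nhds a) := by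
  have h : Tendsto (fun s : ℕ => a + b / (s : ℝ)) atTop (nhds (a + 0)) :=
    Filter.Tendsto.add tendsto_const_nhds (tendsto_aux0 b)
  rw [add_zero] at h
  refine Filter.Tendsto.congr' ?_ h
  filter_upwards [eventually_ge_atTop 1] with s hs
  have hs0 : (s : ℝ) ≠ 0 := (Nat.cast_pos.mpr hs).ne'
  field_simp

lemma tendsto_aux2 (a b c : ℝ) :
    Tendsto (fun s : ℕ => (a * (s : ℝ) ^ 2 + b * (s : ℝ) + c) / (s : ℝ) ^ 2)
      atTop (nhds a) := by
  have h : Tendsto (fun s : ℕ => a + b / (s : ℝ) + c / (s : ℝ) / (s : ℝ))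
      atTop (nhds (a + 0 + 0)) :=
    Filter.Tendsto.add
      (Filter.Tendsto.add tendsto_const_nhds (tendsto_aux0 b))
      (Filter.Tendsto.div_atTop (tendsto_aux0 c) tendsto_natCast_atTop_atTop)
  rw [add_zero, add_zero] at h
  refine Filter.Tendsto.congr' ?_ h
  filter_upwards [eventually_ge_atTop 1] with s hs
  have hs0 : (s : ℝ) ≠ 0 := (Nat.cast_pos.mpr hs).ne'
  field_simp

lemma tendsto_ratio (L M N Lx Cx : ℝ) (hLne : L ≠ 0) :
    Tendsto (fun s : ℕ =>
        (Lx * (s : ℝ) + Cx) / (L * (s : ℝ) ^ 2 + M * (s : ℝ) + N) * (s : ℝ))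
      atTop (nhds (Lx / L)) := by
  have h := Filter.Tendsto.div (tendsto_aux1 Lx Cx) (tendsto_aux2 L M N) hLne
  refine Filter.Tendsto.congr' ?_ h
  filter_upwards [eventually_ge_atTop 1] with s hs
  have hs0 : (s : ℝ) ≠ 0 := (Nat.cast_pos.mpr hs).ne'
  simp only [Pi.div_apply]
  rcases eq_or_ne (L * (s : ℝ) ^ 2 + M * (s : ℝ) + N) 0 with h0 | h0
  · simp [h0]
  · field_simp

/-- The analytic core: for large enough `s`, the point `(r₁ a_k, r₂ b_k)` is a positive
combination of `(u⁻¹ a_k s + k₁, u b_k s + k₂)` and `(u a_k s + k₃, u⁻¹ b_k s + k₄)`. -/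
lemma exists_good_s (u ak bk r₁ r₂ k1 k2 k3 k4 : ℝ)
    (hu : 1 < u) (hak : ak ≠ 0) (hbk : bk ≠ 0) (hr₁ : 0 < r₁) (hr₂ : 0 < r₂)
    (h1 : r₁ * u⁻¹ - r₂ * u < 0) (h2 : r₂ * u⁻¹ - r₁ * u < 0) :
    ∃ s : ℕ, 1 ≤ s ∧ ∃ c₁ c₂ : ℝ, 0 < c₁ ∧ 0 < c₂ ∧
      r₁ * ak = c₁ * (u⁻¹ * ak * s + k1) + c₂ * (u * ak * s + k3) ∧
      r₂ * bk = c₁ * (u * bk * s + k2) + c₂ * (u⁻¹ * bk * s + k4) := by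
  have hu0 : (0:ℝ) < u := lt_trans one_pos hu
  have hu0' : u ≠ 0 := hu0.ne'
  have huinv : u⁻¹ < 1 := inv_lt_one_of_one_lt₀ hu
  have huinv0 : 0 < u⁻¹ := inv_pos.mpr hu0
  have he0 : ak * bk ≠ 0 := mul_ne_zero hak hbk
  have hq : u⁻¹ * u⁻¹ - u * u < 0 := by nlinarith
  obtain ⟨L, hL⟩ : ∃ X : ℝ, X = ak * bk * (u⁻¹ * u⁻¹ - u * u) := ⟨_, rfl⟩
  obtain ⟨M, hM⟩ : ∃ X : ℝ, X = u⁻¹ * ak * k4 + u⁻¹ * bk * k1 - u * bk * k3 - u * ak * k2 := ⟨_, rfl⟩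
  obtain ⟨N, hN⟩ : ∃ X : ℝ, X = k1 * k4 - k2 * k3 := ⟨_, rfl⟩
  obtain ⟨L1, hL1⟩ : ∃ X : ℝ, X = ak * bk * (r₁ * u⁻¹ - r₂ * u) := ⟨_, rfl⟩
  obtain ⟨C1, hC1⟩ : ∃ X : ℝ, X = r₁ * ak * k4 - r₂ * bk * k3 := ⟨_, rfl⟩
  obtain ⟨L2, hL2⟩ : ∃ X : ℝ, X = ak * bk * (r₂ * u⁻¹ - r₁ * u) := ⟨_, rfl⟩
  obtain ⟨C2, hC2⟩ : ∃ X : ℝ, X = r₂ * bk * k1 - r₁ * ak * k2 := ⟨_, rfl⟩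
  have hLne : L ≠ 0 := hL ▸ mul_ne_zero he0 hq.ne
  have hL1L : 0 < L1 / L := by
    rw [hL1, hL, mul_div_mul_left _ _ he0]
    exact div_pos_of_neg_of_neg h1 hq
  have hL2L : 0 < L2 / L := by
    rw [hL2, hL, mul_div_mul_left _ _ he0]
    exact div_pos_of_neg_of_neg h2 hq
  have T1 := tendsto_ratio L M N L1 C1 hLne
  have T2 := tendsto_ratio L M N L2 C2 hLne
  have E1 : ∀ᶠ s : ℕ in atTop,
      0 < (L1 * (s:ℝ) + C1) / (L * (s:ℝ)^2 + M * (s:ℝ) + N) * (s:ℝ) :=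
    T1.eventually (eventually_gt_nhds hL1L)
  have E2 : ∀ᶠ s : ℕ in atTop,
      0 < (L2 * (s:ℝ) + C2) / (L * (s:ℝ)^2 + M * (s:ℝ) + N) * (s:ℝ) :=
    T2.eventually (eventually_gt_nhds hL2L)
  obtain ⟨s, hp1, hp2, hs1⟩ := (E1.and (E2.and (eventually_ge_atTop 1))).exists
  have hsR : (0:ℝ) < s := Nat.cast_pos.mpr hs1
  obtain ⟨D, hD⟩ : ∃ X : ℝ, X = L * (s:ℝ)^2 + M * (s:ℝ) + N := ⟨_, rfl⟩
  rw [← hD] at hp1 hp2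
  have hc1 : 0 < (L1 * (s:ℝ) + C1) / D := by nlinarith
  have hc2 : 0 < (L2 * (s:ℝ) + C2) / D := by nlinarith
  have hDne : D ≠ 0 := by
    intro h
    rw [h, div_zero] at hc1
    exact lt_irrefl 0 hc1
  refine ⟨s, hs1, (L1 * (s:ℝ) + C1) / D, (L2 * (s:ℝ) + C2) / D, hc1, hc2, ?_, ?_⟩
  · have expand : (L1 * (s:ℝ) + C1) * (u⁻¹ * ak * s + k1)
        + (L2 * (s:ℝ) + C2) * (u * ak * s + k3) = (r₁ * ak) * D := by
      rw [hD, hL1, hC1, hL2, hC2, hL, hM, hN]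
      ring
    rw [div_mul_eq_mul_div, div_mul_eq_mul_div, ← add_div, eq_comm, div_eq_iff hDne]
    linear_combination expand
  · have expand : (L1 * (s:ℝ) + C1) * (u * bk * s + k2)
        + (L2 * (s:ℝ) + C2) * (u⁻¹ * bk * s + k4) = (r₂ * bk) * D := by
      rw [hD, hL1, hC1, hL2, hC2, hL, hM, hN]
      ring
    rw [div_mul_eq_mul_div, div_mul_eq_mul_div, ← add_div, eq_comm, div_eq_iff hDne]
    linear_combination expand

end Stmt15Aux

open Stmt15Aux

/-- With the diagonal alphabet setup and `λ > 1`: for `(i,j) ∈ J₊ × J₋`,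
`k ∈ J₀`, and `(x,y)ᵀ ∈ Cell(e_k)` where `e_k = (a_k, b_k)ᵀ`, there are elements
`(I,v), (I,w)` of `⟨𝒢'⟩`, each represented by a word over `𝒢'` in which the letter
indexed `k` occurs, such that `(x,y)ᵀ = r₁·v + r₂·w` for some reals `r₁, r₂ > 0`. -/
theorem cell_ek_positive_combination
    (K : ℕ) (lam : ℝ) (hlam : 1 < lam) (z : Fin K → ℤ) (a b : Fin K → ℝ)
    (i j k : Fin K) (hi : 0 < z i) (hj : z j < 0) (hk : z k = 0) (x y : ℝ)
    (hxy : ![x, y] ∈ cell ![a k, b k]) :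
    ∃ lv lw : List Aff2,
      (∀ g ∈ lv, ∃ t, g = diagAlphabet lam z a b t) ∧
      (∀ g ∈ lw, ∃ t, g = diagAlphabet lam z a b t) ∧
      diagAlphabet lam z a b k ∈ lv ∧ diagAlphabet lam z a b k ∈ lw ∧
      lv.prod.lin = 1 ∧ lw.prod.lin = 1 ∧
      ∃ r₁ r₂ : ℝ, 0 < r₁ ∧ 0 < r₂ ∧
        ![x, y] = r₁ • lv.prod.trans + r₂ • lw.prod.trans := by
  obtain ⟨r₁, r₂, hr₁, hr₂, hxyeq⟩ := hxy
  have hx : x = r₁ * a k := by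
    have := congrFun hxyeq 0; simpa using this
  have hy : y = r₂ * b k := by
    have := congrFun hxyeq 1; simpa using this
  have hlam0 : (0:ℝ) < lam := lt_trans one_pos hlam
  have hgk : diagAlphabet lam z a b k = dAff 1 1 (a k) (b k) := by
    unfold diagAlphabet dAff
    rw [hk]
    norm_num
  by_cases hak : a k = 0
  · refine ⟨[diagAlphabet lam z a b k], [diagAlphabet lam z a b k],
      ?_, ?_, by simp, by simp, ?_, ?_, r₂ / 2, r₂ / 2,
      by positivity, by positivity, ?_⟩
    · rintro g hg
      rw [List.mem_singleton] at hg
      exact ⟨k, hg⟩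
    · rintro g hg
      rw [List.mem_singleton] at hg
      exact ⟨k, hg⟩
    · rw [List.prod_singleton, hgk, dAff_lin_one]
    · rw [List.prod_singleton, hgk, dAff_lin_one]
    · rw [List.prod_singleton, hgk, dAff_trans]
      funext r; fin_cases r <;> simp [hx, hy, hak] <;> ring
  by_cases hbk : b k = 0
  · refine ⟨[diagAlphabet lam z a b k], [diagAlphabet lam z a b k],
      ?_, ?_, by simp, by simp, ?_, ?_, r₁ / 2, r₁ / 2,
      by positivity, by positivity, ?_⟩
    · rintro g hg
      rw [List.mem_singleton] at hg
      exact ⟨k, hg⟩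
    · rintro g hg
      rw [List.mem_singleton] at hg
      exact ⟨k, hg⟩
    · rw [List.prod_singleton, hgk, dAff_lin_one]
    · rw [List.prod_singleton, hgk, dAff_lin_one]
    · rw [List.prod_singleton, hgk, dAff_trans]
      funext r; fin_cases r <;> simp [hx, hy, hbk] <;> ring
  -- main case
  obtain ⟨P, hP⟩ : ∃ P : ℕ, z i = (P : ℤ) := ⟨(z i).toNat, (Int.toNat_of_nonneg hi.le).symm⟩
  obtain ⟨Q, hQ⟩ : ∃ Q : ℕ, z j = -(Q : ℤ) :=
    ⟨(-z j).toNat, by rw [Int.toNat_of_nonneg (by omega)]; ring⟩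
  have hP1 : 1 ≤ P := by
    rw [hP] at hi; exact_mod_cast hi
  have hQ1 : 1 ≤ Q := by
    rw [hQ] at hj; omega
  set A : ℝ := lam ^ P with hA
  set B : ℝ := lam ^ Q with hB
  have hgi : diagAlphabet lam z a b i = dAff A A⁻¹ (a i) (b i) := by
    unfold diagAlphabet dAff
    rw [hP, zpow_neg, zpow_natCast]
  have hgj : diagAlphabet lam z a b j = dAff B⁻¹ B (a j) (b j) := by
    unfold diagAlphabet dAff
    rw [hQ, neg_neg, zpow_neg, zpow_natCast]
  -- choose t
  obtain ⟨t, ht⟩ := pow_unbounded_of_one_lt (r₁ / r₂ + r₂ / r₁ + 1) hlam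
  set u : ℝ := lam ^ (P * Q * t) with hu
  have htle : t ≤ P * Q * t := by
    have h := Nat.mul_le_mul (Nat.mul_le_mul hP1 hQ1) (le_refl t)
    simpa using h
  have hub : r₁ / r₂ + r₂ / r₁ + 1 < u :=
    lt_of_lt_of_le ht (pow_le_pow_right₀ hlam.le htle)
  have hdiv1 : 0 < r₁ / r₂ := div_pos hr₁ hr₂
  have hdiv2 : 0 < r₂ / r₁ := div_pos hr₂ hr₁
  have hu1 : 1 < u := by linarith
  have hu0 : (0:ℝ) < u := lt_trans one_pos hu1
  have hu0' : u ≠ 0 := hu0.ne'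
  have hc1 : r₁ * u⁻¹ - r₂ * u < 0 := by
    have e1 : r₁ < u * r₂ := (div_lt_iff₀ hr₂).mp (by linarith)
    have e2 : r₁ * u⁻¹ ≤ r₁ := by
      nlinarith [inv_le_one_of_one_le₀ hu1.le, inv_pos.mpr hu0]
    nlinarith
  have hc2 : r₂ * u⁻¹ - r₁ * u < 0 := by
    have e1 : r₂ < u * r₁ := (div_lt_iff₀ hr₁).mp (by linarith)
    have e2 : r₂ * u⁻¹ ≤ r₂ := by
      nlinarith [inv_le_one_of_one_le₀ hu1.le, inv_pos.mpr hu0]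
    nlinarith
  obtain ⟨cI₁, cI₂, hIprod⟩ := prod_replicate_dAff (Q * t) A A⁻¹ (a i) (b i)
  obtain ⟨cJ₁, cJ₂, hJprod⟩ := prod_replicate_dAff (P * t) B⁻¹ B (a j) (b j)
  have hApow : A ^ (Q * t) = u := by
    rw [hA, hu, ← pow_mul, ← mul_assoc]
  have hAinvpow : (A⁻¹) ^ (Q * t) = u⁻¹ := by rw [inv_pow, hApow]
  have hBpow : B ^ (P * t) = u := by
    rw [hB, hu, ← pow_mul]
    congr 1
    ring
  have hBinvpow : (B⁻¹) ^ (P * t) = u⁻¹ := by rw [inv_pow, hBpow]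
  obtain ⟨s, hs1, c₁, c₂, hc₁, hc₂, heq1, heq2⟩ :=
    exists_good_s u (a k) (b k) r₁ r₂ (u⁻¹ * cI₁ + cJ₁) (u * cI₂ + cJ₂)
      (u * cJ₁ + cI₁) (u⁻¹ * cJ₂ + cI₂) hu1 hak hbk hr₁ hr₂ hc1 hc2
  have hVprod : (List.replicate (P * t) (diagAlphabet lam z a b j)
      ++ (List.replicate s (diagAlphabet lam z a b k)
        ++ List.replicate (Q * t) (diagAlphabet lam z a b i))).prod
      = dAff 1 1 (u⁻¹ * a k * s + (u⁻¹ * cI₁ + cJ₁)) (u * b k * s + (u * cI₂ + cJ₂)) := by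
    rw [List.prod_append, List.prod_append, hgi, hgj, hgk,
      hIprod, hJprod, prod_replicate_unit, dAff_mul, dAff_mul,
      hApow, hAinvpow, hBpow, hBinvpow]
    exact dAff_congr (by field_simp) (by field_simp) (by ring) (by ring)
  have hWprod : (List.replicate (Q * t) (diagAlphabet lam z a b i)
      ++ (List.replicate s (diagAlphabet lam z a b k)
        ++ List.replicate (P * t) (diagAlphabet lam z a b j))).prod
      = dAff 1 1 (u * a k * s + (u * cJ₁ + cI₁)) (u⁻¹ * b k * s + (u⁻¹ * cJ₂ + cI₂)) := by
    rw [List.prod_append, List.prod_append, hgi, hgj, hgk,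
      hIprod, hJprod, prod_replicate_unit, dAff_mul, dAff_mul,
      hApow, hAinvpow, hBpow, hBinvpow]
    exact dAff_congr (by field_simp) (by field_simp) (by ring) (by ring)
  have hmemk : ∀ (l1 l2 : List Aff2), diagAlphabet lam z a b k
      ∈ l1 ++ (List.replicate s (diagAlphabet lam z a b k) ++ l2) := by
    intro l1 l2
    refine List.mem_append.mpr (Or.inr (List.mem_append.mpr (Or.inl ?_)))
    exact List.mem_replicate.mpr ⟨by omega, rfl⟩
  refine ⟨_, _, ?_, ?_, hmemk _ _, hmemk _ _, hVprod ▸ dAff_lin_one _ _,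
    hWprod ▸ dAff_lin_one _ _, c₁, c₂, hc₁, hc₂, ?_⟩
  · intro g hg
    simp only [List.mem_append, List.mem_replicate] at hg
    rcases hg with ⟨-, rfl⟩ | ⟨-, rfl⟩ | ⟨-, rfl⟩
    exacts [⟨j, rfl⟩, ⟨k, rfl⟩, ⟨i, rfl⟩]
  · intro g hg
    simp only [List.mem_append, List.mem_replicate] at hg
    rcases hg with ⟨-, rfl⟩ | ⟨-, rfl⟩ | ⟨-, rfl⟩
    exacts [⟨i, rfl⟩, ⟨k, rfl⟩, ⟨j, rfl⟩]
  · rw [hVprod, hWprod, dAff_trans, dAff_trans]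
    funext r
    fin_cases r
    · simpa [hx] using heq1
    · simpa [hy] using heq2
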